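/- Let n ≥ 1 and let p < 1 be a real number. Let f : ℝⁿ → ℝ be f(x) = e^{‖x‖²} and V(y) = ‖∇f(y)‖^{p-2} ∇f(y). Then there exists R > 0 such that for every x with ‖x‖ > R, the divergence of V at x is strictly negative: div V(x) < 0. Consequently f, although convex, is not p-subharmonic on ℝⁿ for any p < 1. (Counter-Example 3.1, showing sharpness of p ≥ 1 in Theorems 1.3 and 1.4.) -/

import Mathlib

open scoped RealInnerProductSpace
open MeasureTheory Filter Metric Real

lemma grad_exp_norm_sq_aux {n : ℕ} (x : EuclideanSpace ℝ (Fin n)) :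
    HasGradientAt (fun x : EuclideanSpace ℝ (Fin n) => Real.exp (‖x‖ ^ 2))
      ((2 * Real.exp (‖x‖ ^ 2)) • x) x := by
  rw [hasGradientAt_iff_hasFDerivAt]
  have h := ((hasStrictFDerivAt_norm_sq x).hasFDerivAt).exp
  refine h.congr_fderiv ?_
  ext v
  simp [InnerProductSpace.toDual_apply_apply, real_inner_smul_left]
  ring

set_option maxHeartbeats 1000000 in
/-- Counter-Example 3.1.  Let `p < 1`, `f(x) = e^{‖x‖²}` on
`ℝⁿ` and `V = ‖∇f‖^(p-2) ∇f`.  Then there is `R > 0` such that the divergence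
of `V` (trace of its Fréchet derivative) is strictly negative at every `x`
with `‖x‖ > R`; hence `f`, although convex, is not `p`-subharmonic for `p < 1`. -/
theorem exp_norm_sq_not_p_subharmonic_for_p_lt_one
    (n : ℕ) (hn : 1 ≤ n) (p : ℝ) (hp : p < 1)
    (f : EuclideanSpace ℝ (Fin n) → ℝ)
    (hf : f = fun x => Real.exp (‖x‖ ^ 2))
    (V : EuclideanSpace ℝ (Fin n) → EuclideanSpace ℝ (Fin n))
    (hV : V = fun y => ‖gradient f y‖ ^ (p - 2) • gradient f y) :
    ∃ R : ℝ, 0 < R ∧ ∀ x : EuclideanSpace ℝ (Fin n), R < ‖x‖ →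
      ∑ i : Fin n,
          ⟪fderiv ℝ V x (EuclideanSpace.single i 1), EuclideanSpace.single i 1⟫ < 0 := by
  have hgrad : ∀ y : EuclideanSpace ℝ (Fin n),
      gradient f y = (2 * Real.exp (‖y‖ ^ 2)) • y := by
    intro y
    rw [hf]
    exact (grad_exp_norm_sq_aux y).gradient
  set q : ℝ := (p - 2) / 2 with hq
  set c : ℝ := (2 : ℝ) ^ (p - 1) with hc
  have hcpos : 0 < c := Real.rpow_pos_of_pos two_pos _
  set φ : ℝ → ℝ := fun t => c * (Real.exp ((p - 1) * t) * t ^ q) with hφ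
  set φ' : ℝ → ℝ := fun t =>
    c * (Real.exp ((p - 1) * t) * (p - 1) * t ^ q
      + Real.exp ((p - 1) * t) * (q * t ^ (q - 1))) with hφ'
  set W : EuclideanSpace ℝ (Fin n) → EuclideanSpace ℝ (Fin n) :=
    fun y => φ (‖y‖ ^ 2) • y with hW
  have hVW : ∀ y : EuclideanSpace ℝ (Fin n), y ≠ 0 → V y = W y := by
    intro y hy
    have hr : 0 < ‖y‖ := norm_pos_iff.mpr hy
    have hE : 0 < Real.exp (‖y‖ ^ 2) := Real.exp_pos _
    rw [hV, hW]
    simp only [hgrad y]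
    rw [norm_smul, Real.norm_eq_abs, abs_of_pos (by positivity), smul_smul]
    congr 1
    show (2 * Real.exp (‖y‖ ^ 2) * ‖y‖) ^ (p - 2) * (2 * Real.exp (‖y‖ ^ 2))
      = c * (Real.exp ((p - 1) * (‖y‖ ^ 2)) * (‖y‖ ^ 2 : ℝ) ^ q)
    rw [Real.mul_rpow (by positivity) hr.le, Real.mul_rpow (by norm_num) hE.le]
    have h1 : Real.exp (‖y‖ ^ 2) ^ (p - 2) = Real.exp ((‖y‖ ^ 2) * (p - 2)) :=
      (Real.exp_mul _ _).symm
    have h2 : (‖y‖ ^ 2 : ℝ) ^ q = ‖y‖ ^ (p - 2) := by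
      rw [← Real.rpow_natCast ‖y‖ 2, ← Real.rpow_mul (norm_nonneg y)]
      norm_num [hq]
      ring_nf
    have h3 : (2 : ℝ) ^ (p - 2) * 2 = c := by
      rw [hc, ← Real.rpow_add_one (by norm_num : (2:ℝ) ≠ 0) (p - 2)]
      ring_nf
    rw [h1, h2, ← h3,
      show (p - 1) * (‖y‖ ^ 2 : ℝ) = ‖y‖ ^ 2 * (p - 2) + ‖y‖ ^ 2 by ring, Real.exp_add]
    ring
  refine ⟨1 + Real.sqrt ((n + 2) / (2 * (1 - p))), by positivity, ?_⟩
  intro x hx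
  have hKnn : (0 : ℝ) ≤ (n + 2) / (2 * (1 - p)) := by
    apply div_nonneg (by positivity)
    nlinarith
  have hsq : Real.sqrt ((n + 2) / (2 * (1 - p))) ^ 2 = (n + 2) / (2 * (1 - p)) :=
    Real.sq_sqrt hKnn
  have hr : 0 < ‖x‖ := lt_of_le_of_lt (by positivity) hx
  have hx0 : x ≠ 0 := norm_pos_iff.mp hr
  set t : ℝ := ‖x‖ ^ 2 with hts
  have ht : 0 < t := by positivity
  -- t > (n+2)/(2(1-p))
  have hKt : (n + 2) / (2 * (1 - p)) < t := by
    have h1 : Real.sqrt ((n + 2) / (2 * (1 - p))) < ‖x‖ := by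
      have := Real.sqrt_nonneg ((n + 2) / (2 * (1 - p)))
      linarith
    have h2 := Real.sqrt_nonneg ((n + 2) / (2 * (1 - p)))
    nlinarith
  -- derivative of W at x
  have hnsq : HasFDerivAt (fun y : EuclideanSpace ℝ (Fin n) => ‖y‖ ^ 2)
      (2 • (innerSL ℝ x)) x := (hasStrictFDerivAt_norm_sq x).hasFDerivAt
  have hφd : HasDerivAt φ (φ' t) t := by
    have h1 : HasDerivAt (fun s : ℝ => Real.exp ((p - 1) * s))
        (Real.exp ((p - 1) * t) * (p - 1)) t := by
      simpa using ((hasDerivAt_id t).const_mul (p - 1)).exp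
    have h2 : HasDerivAt (fun s : ℝ => s ^ q) (q * t ^ (q - 1)) t :=
      Real.hasDerivAt_rpow_const (Or.inl ht.ne')
    exact (h1.mul h2).const_mul c
  have hWd : HasFDerivAt W
      (φ t • ContinuousLinearMap.id ℝ (EuclideanSpace ℝ (Fin n))
        + (φ' t • (2 • (innerSL ℝ x))).smulRight x) x := by
    have hcomp : HasFDerivAt (fun y : EuclideanSpace ℝ (Fin n) => φ (‖y‖ ^ 2))
        (φ' t • (2 • (innerSL ℝ x))) x := by
        have := hφd.comp_hasFDerivAt x hnsq; exact this
    exact hcomp.smul (hasFDerivAt_id x)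
  have hVe : V =ᶠ[nhds x] W := by
    filter_upwards [IsOpen.mem_nhds isOpen_compl_singleton
      (by simpa using hx0 : x ∈ ({0}ᶜ : Set (EuclideanSpace ℝ (Fin n))))] with y hy
    exact hVW y hy
  have hfd : fderiv ℝ V x
      = φ t • ContinuousLinearMap.id ℝ (EuclideanSpace ℝ (Fin n))
        + (φ' t • (2 • (innerSL ℝ x))).smulRight x := by
    rw [hVe.fderiv_eq, hWd.fderiv]
  rw [hfd]
  have hterm : ∀ i : Fin n,
      ⟪(φ t • ContinuousLinearMap.id ℝ (EuclideanSpace ℝ (Fin n))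
        + (φ' t • (2 • (innerSL ℝ x))).smulRight x) (EuclideanSpace.single i 1),
        EuclideanSpace.single i 1⟫
      = φ t + 2 * φ' t * (x i * x i) := by
    intro i
    simp only [ContinuousLinearMap.add_apply, ContinuousLinearMap.smul_apply,
      ContinuousLinearMap.id_apply, ContinuousLinearMap.smulRight_apply,
      innerSL_apply_apply, inner_add_left, real_inner_smul_left, smul_eq_mul,
      EuclideanSpace.inner_single_left, EuclideanSpace.inner_single_right]
    simp
    ring
  rw [Finset.sum_congr rfl (fun i _ => hterm i)]
  rw [Finset.sum_add_distrib, Finset.sum_const, ← Finset.mul_sum]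
  have hsum : ∑ i : Fin n, x i * x i = t := by
    rw [hts, EuclideanSpace.norm_eq, Real.sq_sqrt (by positivity)]
    simp [sq]
  rw [hsum]
  simp only [Finset.card_univ, Fintype.card_fin, nsmul_eq_mul]
  -- now show n * φ t + 2 * φ' t * t < 0
  have hs : 0 < t ^ q := Real.rpow_pos_of_pos ht _
  have hE : 0 < Real.exp ((p - 1) * t) := Real.exp_pos _
  have htq : t ^ (q - 1) = t ^ q / t := Real.rpow_sub_one ht.ne' q
  have key : (n : ℝ) * φ t + 2 * φ' t * t
      = c * Real.exp ((p - 1) * t) * t ^ q * (n + (p - 2) + 2 * (p - 1) * t) := by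
    simp only [hφ, hφ']
    rw [htq]
    field_simp
    ring
  rw [key]
  have hbr : (n : ℝ) + (p - 2) + 2 * (p - 1) * t < 0 := by
    have hpp : (0 : ℝ) < 2 * (1 - p) := by linarith
    have h2 : (n + 2 : ℝ) < 2 * (1 - p) * t := by
      calc (n + 2 : ℝ) = 2 * (1 - p) * ((n + 2) / (2 * (1 - p))) := by field_simp; rw [div_self (by linarith : (1 - p) ≠ 0)]
        _ < 2 * (1 - p) * t := mul_lt_mul_of_pos_left hKt hpp
    have h3 : 2 * (p - 1) * t = -(2 * (1 - p) * t) := by ring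
    linarith
  have hpos : 0 < c * Real.exp ((p - 1) * t) * t ^ q := by positivity
  exact mul_neg_of_pos_of_neg hpos hbr
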